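/- Let p, q be integers with Δ = p² + 4q positive and not a perfect square, and suppose the least period T(p,q) is odd. Then 2 · Σ_{i=1}^{T(p,q)} a_i(frac(x₊(p,q))) ≤ f(Δ/4), i.e. the bound of Lemma 3 can be halved: Σ_{i=1}^{T(p,q)} a_i(frac(x₊(p,q))) ≤ f(Δ/4)/2. (Improvement of Lemma 3 for odd period.) -/

import Mathlib

open MeasureTheory Filter Set

/-- The Gauss map `y ↦ frac (1/y)`. -/
noncomputable def gaussMap : ℝ → ℝ := fun y => Int.fract (1 / y)

/-- The `i`-th partial quotient of the continued fraction of `x` (for `i ≥ 1`):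
`a_i(x) = ⌊1 / G^[i-1](x)⌋`. -/
noncomputable def cfDigit (i : ℕ) (x : ℝ) : ℤ := ⌊1 / (gaussMap^[i - 1] x)⌋

/-- The larger root `x₊(p,q) = (√(p² + 4q) − p)/2` of `x² + p x = q`. -/
noncomputable def xPlus (p q : ℤ) : ℝ := (Real.sqrt ((p : ℝ) ^ 2 + 4 * (q : ℝ)) - (p : ℝ)) / 2

/-- `Ω_R`: the integer points `(p,q)` with `p² + q² ≤ R²`, `p² + 4q > 0`,
and `p² + 4q` not a perfect square. -/
def OmegaSet (R : ℝ) : Set (ℤ × ℤ) :=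
  {pq | (pq.1 : ℝ) ^ 2 + (pq.2 : ℝ) ^ 2 ≤ R ^ 2 ∧ 0 < pq.1 ^ 2 + 4 * pq.2 ∧
    ¬ IsSquare (pq.1 ^ 2 + 4 * pq.2)}

/-- `P_i(k)`: the Lebesgue measure of `{x ∈ (0,1) : x irrational, a_i(x) = k}`. -/
noncomputable def gkProb (i : ℕ) (k : ℕ) : ℝ :=
  (volume {x : ℝ | x ∈ Set.Ioo (0 : ℝ) 1 ∧ Irrational x ∧ cfDigit i x = (k : ℤ)}).toReal

/-- `T(p,q)`: the least period of the (purely periodic) sequence of partial quotients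
of `frac (x₊(p,q))`. -/
noncomputable def period (p q : ℤ) : ℕ :=
  sInf {T : ℕ | 1 ≤ T ∧ ∀ i : ℕ, 1 ≤ i →
    cfDigit (i + T) (Int.fract (xPlus p q)) = cfDigit i (Int.fract (xPlus p q))}

/-- The sum `Σ_{i=1}^{T(p,q)} a_i(frac (x₊(p,q)))` of the partial quotients
over one least period. -/
noncomputable def periodSum (p q : ℤ) : ℤ :=
  ∑ i ∈ Finset.Icc 1 (period p q), cfDigit i (Int.fract (xPlus p q))

/-- The bound `f(Δ/4)` of Lemma 3: for `Δ ≡ 0 (mod 4)`,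
`f(Δ/4) = 2 Σ_{u=1}^{⌊√(Δ/4)⌋} τ(Δ/4 − u²) + τ(Δ/4)`; otherwise (`Δ ≡ 1 (mod 4)`),
`f(Δ/4) = 2 Σ_{j odd, j ≥ 1, j² < Δ} τ((Δ − j²)/4)`. -/
def fBound (Δ : ℤ) : ℤ :=
  if Δ % 4 = 0 then
    2 * (∑ u ∈ Finset.Icc 1 (Nat.sqrt (Δ / 4).toNat),
          ((((Δ / 4).toNat - u ^ 2).divisors.card : ℤ)))
      + (((Δ / 4).toNat.divisors.card : ℤ))
  else
    2 * ∑ j ∈ (Finset.range Δ.toNat).filter (fun j : ℕ => Odd j ∧ (j : ℤ) ^ 2 < Δ),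
        ((((Δ - (j : ℤ) ^ 2) / 4).toNat.divisors.card : ℤ))

namespace Arnold

noncomputable def xiR (Δ : ℤ) (t : ℤ × ℤ) : ℝ :=
  ((t.1 : ℝ) + Real.sqrt (Δ : ℝ)) / (2 * (t.2 : ℝ))

noncomputable def xibar (Δ : ℤ) (t : ℤ × ℤ) : ℝ :=
  ((t.1 : ℝ) - Real.sqrt (Δ : ℝ)) / (2 * (t.2 : ℝ))

noncomputable def digA (Δ : ℤ) (t : ℤ × ℤ) : ℤ := ⌊xiR Δ t⌋

noncomputable def stp (Δ : ℤ) (t : ℤ × ℤ) : ℤ × ℤ :=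
  (2 * digA Δ t * t.2 - t.1, (Δ - (2 * digA Δ t * t.2 - t.1) ^ 2) / (4 * t.2))

noncomputable def st (Δ : ℤ) (t0 : ℤ × ℤ) : ℕ → ℤ × ℤ
  | 0 => t0
  | n + 1 => stp Δ (st Δ t0 n)

def InvP (Δ : ℤ) (t : ℤ × ℤ) : Prop :=
  1 ≤ t.2 ∧ (4 * t.2 ∣ Δ - t.1 ^ 2) ∧ 1 < xiR Δ t ∧ -1 < xibar Δ t ∧ xibar Δ t < 0

variable {Δ : ℤ}

lemma sqrt_sq (hΔ : 0 ≤ Δ) : Real.sqrt (Δ : ℝ) ^ 2 = (Δ : ℝ) := by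
  rw [sq]; exact Real.mul_self_sqrt (by exact_mod_cast hΔ)

lemma irr_xi (hirr : Irrational (Real.sqrt (Δ : ℝ))) {t : ℤ × ℤ} (hb : t.2 ≠ 0) :
    Irrational (xiR Δ t) := by
  have h1 : Irrational ((t.1 : ℝ) + Real.sqrt (Δ : ℝ)) := hirr.intCast_add t.1
  have h2 : Irrational (((t.1 : ℝ) + Real.sqrt (Δ : ℝ)) / ((2 * t.2 : ℤ) : ℝ)) :=
    h1.div_intCast (by omega)
  unfold xiR
  convert h2 using 2
  push_cast; ring

lemma InvP.b_pos {t : ℤ × ℤ} (h : InvP Δ t) : (0 : ℝ) < 2 * (t.2 : ℝ) := by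
  have : (1 : ℝ) ≤ (t.2 : ℝ) := by exact_mod_cast h.1
  linarith

/-- Unpack the invariant into linear inequalities about `u`, `b`, `√Δ`. -/
lemma InvP.key {t : ℤ × ℤ} (h : InvP Δ t) :
    (0 : ℝ) < (t.2 : ℝ) ∧ 2 * (t.2 : ℝ) < (t.1 : ℝ) + Real.sqrt (Δ : ℝ) ∧
      -(2 * (t.2 : ℝ)) < (t.1 : ℝ) - Real.sqrt (Δ : ℝ) ∧ (t.1 : ℝ) < Real.sqrt (Δ : ℝ) := by
  obtain ⟨hb, _, h3, h4, h5⟩ := h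
  have hb' : (0 : ℝ) < (t.2 : ℝ) := by exact_mod_cast hb
  have hb2 : (0 : ℝ) < 2 * (t.2 : ℝ) := by linarith
  refine ⟨hb', ?_, ?_, ?_⟩
  · have := (one_lt_div hb2).mp h3; linarith
  · have := (lt_div_iff₀ hb2).mp h4; unfold xibar at *; nlinarith [(lt_div_iff₀ hb2).mp h4]
  · have h5' := h5; unfold xibar at h5'
    have := (div_neg_iff).mp h5'
    rcases this with ⟨_, h2⟩ | ⟨h1, _⟩
    · linarith
    · linarith

lemma InvP.u_pos {t : ℤ × ℤ} (h : InvP Δ t) : 1 ≤ t.1 := by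
  obtain ⟨hb, h2, h3, h4⟩ := h.key
  have : (0 : ℝ) < (t.1 : ℝ) := by linarith
  exact_mod_cast this

lemma InvP.usq_lt (hΔ : 0 ≤ Δ) {t : ℤ × ℤ} (h : InvP Δ t) : t.1 ^ 2 < Δ := by
  obtain ⟨hb, h2, h3, h4⟩ := h.key
  have hu : (0 : ℝ) < (t.1 : ℝ) := by linarith
  have hs := sqrt_sq hΔ
  have : ((t.1 : ℝ)) ^ 2 < (Δ : ℝ) := by nlinarith
  exact_mod_cast this

lemma InvP.digA_pos {t : ℤ × ℤ} (h : InvP Δ t) : 1 ≤ digA Δ t := by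
  rw [digA, Int.le_floor]
  exact_mod_cast h.2.2.1.le

/-- `a < ξ < a + 1` strictly, given irrationality. -/
lemma InvP.xi_bounds (hirr : Irrational (Real.sqrt (Δ : ℝ))) {t : ℤ × ℤ} (h : InvP Δ t) :
    ((digA Δ t : ℝ) < xiR Δ t ∧ xiR Δ t < (digA Δ t : ℝ) + 1) := by
  have hxirr : Irrational (xiR Δ t) := irr_xi hirr (by have := h.1; omega)
  constructor
  · exact lt_of_le_of_ne (Int.floor_le _) (Ne.symm (hxirr.ne_int _))
  · exact Int.lt_floor_add_one _

set_option maxHeartbeats 1000000 in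
/-- The fundamental step lemma. -/
lemma step_main (hΔ : 0 ≤ Δ) (hirr : Irrational (Real.sqrt (Δ : ℝ)))
    {t : ℤ × ℤ} (h : InvP Δ t) :
    InvP Δ (stp Δ t) ∧ xiR Δ (stp Δ t) = 1 / (xiR Δ t - (digA Δ t : ℝ)) := by
  obtain ⟨hb0, h2, h3, h4⟩ := h.key
  have hbZ := h.1
  have hdvd := h.2.1
  set s : ℝ := Real.sqrt (Δ : ℝ) with hs
  have hsq : s ^ 2 = (Δ : ℝ) := sqrt_sq hΔ
  set a : ℤ := digA Δ t with ha
  set u : ℤ := t.1 with hu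
  set b : ℤ := t.2 with hb
  have haZ : 1 ≤ a := h.digA_pos
  obtain ⟨hfl, hfu⟩ := h.xi_bounds hirr
  set u' : ℤ := 2 * a * b - u with hu'
  -- real versions
  have hxi : xiR Δ t = ((u : ℝ) + s) / (2 * b) := rfl
  have hfl' : (a : ℝ) < ((u : ℝ) + s) / (2 * b) := hfl
  have hfu' : ((u : ℝ) + s) / (2 * b) < (a : ℝ) + 1 := hfu
  have hb2 : (0 : ℝ) < 2 * (b : ℝ) := by linarith
  have hflm : (a : ℝ) * (2 * b) < (u : ℝ) + s := by
    have := (div_lt_iff₀ hb2).mp hfu'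
    have := (lt_div_iff₀ hb2).mp hfl'
    linarith
  have hfum : (u : ℝ) + s < ((a : ℝ) + 1) * (2 * b) := (div_lt_iff₀ hb2).mp hfu'
  -- s - u' > 0   and   s + u' > 0
  have hspos : (0 : ℝ) < s - (u' : ℝ) := by push_cast [hu']; nlinarith
  have hsneg : (0 : ℝ) < s + (u' : ℝ) := by
    push_cast [hu']
    have hu_s : (u : ℝ) - s < 0 := by linarith
    have haR : (1 : ℝ) ≤ (a : ℝ) := by exact_mod_cast haZ
    have hbR : (1 : ℝ) ≤ (b : ℝ) := by exact_mod_cast hbZ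
    have h2ab : (2 : ℝ) ≤ 2 * ((a:ℝ) * (b:ℝ)) := by nlinarith
    linarith
  have husq : (u' : ℝ) ^ 2 < (Δ : ℝ) := by nlinarith
  have husqZ : u' ^ 2 < Δ := by exact_mod_cast husq
  -- divisibility of Δ - u'^2 by 4b
  have hdvd' : 4 * b ∣ Δ - u' ^ 2 := by
    have : Δ - u' ^ 2 = (Δ - u ^ 2) + 4 * b * (a * u - a ^ 2 * b) := by ring
    rw [this]
    exact dvd_add hdvd ⟨a * u - a ^ 2 * b, by ring⟩
  set b' : ℤ := (Δ - u' ^ 2) / (4 * b) with hb'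
  have hexact : 4 * b * b' = Δ - u' ^ 2 := by
    rw [hb']; exact Int.mul_ediv_cancel' hdvd'
  have hb'pos : 1 ≤ b' := by
    rcases lt_or_ge b' 1 with hlt | hle
    · exfalso; nlinarith [hexact, husqZ]
    · exact hle
  have hstp : stp Δ t = (u', b') := by
    simp only [stp, ← ha, ← hu, ← hb, ← hu', ← hb']
  have hb'R : (0 : ℝ) < (b' : ℝ) := by exact_mod_cast (by omega : (0:ℤ) < b')
  have hexactR : 4 * (b : ℝ) * (b' : ℝ) = (Δ : ℝ) - (u' : ℝ) ^ 2 := by exact_mod_cast hexact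
  -- ξ' = 1/(ξ - a)
  have hxi' : xiR Δ (stp Δ t) = ((u' : ℝ) + s) / (2 * b') := by rw [hstp]; rfl
  have hximinus : xiR Δ t - (a : ℝ) = (s - (u' : ℝ)) / (2 * b) := by
    rw [hxi]; push_cast [hu']; field_simp; ring
  have hkey : ((u' : ℝ) + s) * (s - (u' : ℝ)) = 4 * (b : ℝ) * (b' : ℝ) := by
    nlinarith [hsq, hexactR]
  have hprod : xiR Δ (stp Δ t) * (xiR Δ t - (a : ℝ)) = 1 := by
    rw [hxi', hximinus, div_mul_div_comm, hkey, div_eq_one_iff_eq (by positivity)]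
    ring
  have hxm_pos : 0 < xiR Δ t - (a : ℝ) := by linarith [hfl]
  have heq : xiR Δ (stp Δ t) = 1 / (xiR Δ t - (a : ℝ)) :=
    eq_one_div_of_mul_eq_one_right (by linarith [hprod] : (xiR Δ t - (a : ℝ)) * xiR Δ (stp Δ t) = 1)
  -- conjugate: ξ̄' = 1/(ξ̄ - a)
  have hxibar : xibar Δ t = ((u : ℝ) - s) / (2 * b) := rfl
  have hxibar' : xibar Δ (stp Δ t) = ((u' : ℝ) - s) / (2 * b') := by rw [hstp]; rfl
  have hbarprod : xibar Δ (stp Δ t) * (xibar Δ t - (a : ℝ)) = 1 := by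
    rw [hxibar', hxibar]
    have : ((u : ℝ) - s) / (2 * b) - (a : ℝ) = -(((u' : ℝ) + s)) / (2 * b) := by
      push_cast [hu']; field_simp; ring
    rw [this, div_mul_div_comm]
    have hkey2 : ((u' : ℝ) - s) * (-((u' : ℝ) + s)) = 4 * (b : ℝ) * (b' : ℝ) := by
      nlinarith [hsq, hexactR]
    rw [hkey2, div_eq_one_iff_eq (by positivity)]
    ring
  have hbar_lt : xibar Δ t - (a : ℝ) < -1 := by
    have h5 : xibar Δ t < 0 := by
      rw [hxibar]; apply div_neg_of_neg_of_pos; · linarith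
      · linarith
    have : (1 : ℝ) ≤ (a : ℝ) := by exact_mod_cast haZ
    linarith
  have hbar'neg : xibar Δ (stp Δ t) < 0 := by
    rcases lt_trichotomy (xibar Δ (stp Δ t)) 0 with h | h | h
    · exact h
    · exfalso; rw [h] at hbarprod; simp at hbarprod
    · exfalso; nlinarith [hbarprod]
  have hbar'gt : -1 < xibar Δ (stp Δ t) := by nlinarith [hbarprod]
  have hxi'gt : 1 < xiR Δ (stp Δ t) := by
    rw [heq]
    rw [lt_div_iff₀ hxm_pos]
    linarith [hfu]
  refine ⟨⟨?_, ?_, hxi'gt, hbar'gt, hbar'neg⟩, heq⟩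
  · rw [hstp]; exact hb'pos
  · rw [hstp]
    exact ⟨b, by rw [← hexact]; ring⟩


/-- initial state. -/
noncomputable def t0 (p q : ℤ) : ℤ × ℤ :=
  (p + 2 * ⌊xPlus p q⌋, q - p * ⌊xPlus p q⌋ - ⌊xPlus p q⌋ ^ 2)

lemma cast_disc (p q : ℤ) : (((p ^ 2 + 4 * q : ℤ)) : ℝ) = (p : ℝ) ^ 2 + 4 * (q : ℝ) := by
  push_cast; ring

set_option maxHeartbeats 1000000 in
lemma base_main (p q : ℤ) (h5 : 5 ≤ p ^ 2 + 4 * q)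
    (hirr : Irrational (Real.sqrt ((p ^ 2 + 4 * q : ℤ) : ℝ))) :
    InvP (p ^ 2 + 4 * q) (t0 p q) ∧
      Int.fract (xPlus p q) = 1 / xiR (p ^ 2 + 4 * q) (t0 p q) := by
  set Δ : ℤ := p ^ 2 + 4 * q with hΔdef
  set s : ℝ := Real.sqrt ((Δ : ℤ) : ℝ) with hs
  have hΔ0 : (0 : ℤ) ≤ Δ := by omega
  have hsq : s ^ 2 = (Δ : ℝ) := sqrt_sq hΔ0
  have hs0 : 0 ≤ s := Real.sqrt_nonneg _
  have hs2 : 2 < s := by nlinarith [hsq, (by exact_mod_cast h5 : (5:ℝ) ≤ (Δ:ℝ))]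
  have hxp : xPlus p q = (s - (p : ℝ)) / 2 := by
    rw [xPlus, hs, cast_disc]
  set m : ℤ := ⌊xPlus p q⌋ with hm
  set u1 : ℤ := p + 2 * m with hu1
  set b1 : ℤ := q - p * m - m ^ 2 with hb1
  have ht0 : t0 p q = (u1, b1) := rfl
  set y : ℝ := Int.fract (xPlus p q) with hy
  have hyd : y = (s - (u1 : ℝ)) / 2 := by
    rw [hy, Int.fract, ← hm, hxp]; push_cast [hu1]; ring
  have hxirr : Irrational (xPlus p q) := by
    rw [hxp]
    have h1 : Irrational (s - (p : ℝ)) := hirr.sub_intCast p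
    have := h1.div_intCast (m := 2) (by norm_num)
    simpa using this
  have hy0 : 0 < y := by
    rcases (Int.fract_nonneg (xPlus p q)).lt_or_eq with h | h
    · exact h
    · exfalso
      have hEq : xPlus p q = (⌊xPlus p q⌋ : ℝ) := by
        have h2 := Int.self_sub_floor (xPlus p q)
        rw [← h] at h2; linarith
      exact hxirr.ne_int _ hEq
  have hy1 : y < 1 := Int.fract_lt_one _
  have hu1R : (u1 : ℝ) = s - 2 * y := by rw [hyd]; ring
  have hb4 : (4 * b1 : ℤ) = Δ - u1 ^ 2 := by rw [hb1, hu1, hΔdef]; ring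
  have hb4R : 4 * (b1 : ℝ) = (Δ : ℝ) - (u1 : ℝ) ^ 2 := by exact_mod_cast hb4
  have hb1R : 4 * (b1 : ℝ) = 4 * y * (s - y) := by
    rw [hb4R, hu1R, ← hsq]; ring
  have hb1pos : 1 ≤ b1 := by
    have : (0 : ℝ) < (b1 : ℝ) := by nlinarith
    exact_mod_cast this
  have hb1Rpos : (0 : ℝ) < (b1 : ℝ) := by exact_mod_cast (by omega : (0:ℤ) < b1)
  have hxi : xiR Δ (t0 p q) = ((u1 : ℝ) + s) / (2 * b1) := by rw [ht0]; rfl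
  have hxiy : xiR Δ (t0 p q) * y = 1 := by
    rw [hxi, hyd]
    rw [div_mul_div_comm]
    have : ((u1 : ℝ) + s) * (s - (u1 : ℝ)) = 2 * (b1 : ℝ) * 2 := by nlinarith [hsq, hb4R]
    rw [this, div_eq_one_iff_eq (by positivity)]
  have hyinv : y = 1 / xiR Δ (t0 p q) := eq_one_div_of_mul_eq_one_right hxiy
  have hxipos : 0 < xiR Δ (t0 p q) := by nlinarith
  have hxigt : 1 < xiR Δ (t0 p q) := by nlinarith
  have hxibar : xibar Δ (t0 p q) = ((u1 : ℝ) - s) / (2 * b1) := by rw [ht0]; rfl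
  refine ⟨⟨hb1pos, ?_, hxigt, ?_, ?_⟩, hyinv⟩
  · show 4 * b1 ∣ Δ - u1 ^ 2
    exact ⟨1, by omega⟩
  · rw [hxibar, lt_div_iff₀ (by positivity)]
    rw [hu1R]
    nlinarith
  · rw [hxibar]
    apply div_neg_of_neg_of_pos
    · rw [hu1R]; linarith
    · positivity

lemma iter_main (p q : ℤ) (h5 : 5 ≤ p ^ 2 + 4 * q)
    (hirr : Irrational (Real.sqrt ((p ^ 2 + 4 * q : ℤ) : ℝ))) (n : ℕ) :
    InvP (p ^ 2 + 4 * q) (st (p ^ 2 + 4 * q) (t0 p q) n) ∧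
      gaussMap^[n] (Int.fract (xPlus p q)) =
        1 / xiR (p ^ 2 + 4 * q) (st (p ^ 2 + 4 * q) (t0 p q) n) := by
  induction n with
  | zero => simpa [st] using base_main p q h5 hirr
  | succ n ih =>
    obtain ⟨hinv, hgauss⟩ := ih
    obtain ⟨hinv', hxi'⟩ := step_main (by omega) hirr hinv
    have hxigt := hinv.2.2.1
    have hxine : xiR (p ^ 2 + 4 * q) (st (p ^ 2 + 4 * q) (t0 p q) n) ≠ 0 := by linarith
    constructor
    · exact hinv'
    · rw [Function.iterate_succ_apply', hgauss]
      show Int.fract (1 / (1 / xiR (p ^ 2 + 4 * q) (st (p ^ 2 + 4 * q) (t0 p q) n))) = _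
      rw [one_div_one_div]
      have hst : st (p ^ 2 + 4 * q) (t0 p q) (n + 1) = stp (p ^ 2 + 4 * q) (st (p ^ 2 + 4 * q) (t0 p q) n) := rfl
      rw [hst, hxi', one_div_one_div]
      rw [← Int.self_sub_floor]
      rfl

lemma dig_eq (p q : ℤ) (h5 : 5 ≤ p ^ 2 + 4 * q)
    (hirr : Irrational (Real.sqrt ((p ^ 2 + 4 * q : ℤ) : ℝ))) (n : ℕ) :
    cfDigit (n + 1) (Int.fract (xPlus p q)) = digA (p ^ 2 + 4 * q) (st (p ^ 2 + 4 * q) (t0 p q) n) := by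
  have h := (iter_main p q h5 hirr n).2
  rw [cfDigit]
  simp only [Nat.add_sub_cancel]
  rw [h, one_div_one_div]
  rfl


set_option maxHeartbeats 1000000 in
/-- Facts about the intermediate point `ξ − k`, `0 ≤ k < a`. -/
lemma mid (hΔ0 : 0 ≤ Δ) (hirr : Irrational (Real.sqrt (Δ : ℝ))) {t : ℤ × ℤ}
    (h : InvP Δ t) {k : ℤ} (hk0 : 0 ≤ k) (hk : k < digA Δ t) :
    (4 * t.2 ∣ Δ - (t.1 - 2 * k * t.2) ^ 2) ∧ 0 < Δ - (t.1 - 2 * k * t.2) ^ 2 ∧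
      1 ≤ (Δ - (t.1 - 2 * k * t.2) ^ 2) / (4 * t.2) ∧
      2 * (t.2 : ℝ) < ((t.1 - 2 * k * t.2 : ℤ) : ℝ) + Real.sqrt (Δ : ℝ) := by
  obtain ⟨hb0, h2, h4, h5⟩ := h.key
  have hbZ := h.1
  have hdvd := h.2.1
  set s : ℝ := Real.sqrt (Δ : ℝ) with hs
  have hsq : s ^ 2 = (Δ : ℝ) := sqrt_sq hΔ0
  set u : ℤ := t.1 with hu
  set b : ℤ := t.2 with hb
  set w : ℤ := u - 2 * k * b with hw
  set a : ℤ := digA Δ t with ha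
  obtain ⟨hfl, _⟩ := h.xi_bounds hirr
  have hxi : xiR Δ t = ((u : ℝ) + s) / (2 * b) := rfl
  have hb2 : (0 : ℝ) < 2 * (b : ℝ) := by linarith
  have hfl' : (a : ℝ) * (2 * b) < (u : ℝ) + s := by
    have := (lt_div_iff₀ hb2).mp (hfl.trans_eq hxi)
    linarith
  have hkR : (k : ℝ) ≤ (a : ℝ) - 1 := by
    have : k ≤ a - 1 := by omega
    exact_mod_cast this
  have hwR : (w : ℝ) = (u : ℝ) - 2 * (k : ℝ) * (b : ℝ) := by push_cast [hw]; ring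
  have hiv : 2 * (b : ℝ) < (w : ℝ) + s := by
    rw [hwR]; nlinarith
  have hwlt : (w : ℝ) < s := by
    have hkb : (0 : ℝ) ≤ (k : ℝ) * (b : ℝ) := by positivity
    rw [hwR]; nlinarith
  have hpos : 0 < Δ - w ^ 2 := by
    have h1 : ((w : ℝ)) ^ 2 < (Δ : ℝ) := by nlinarith
    have h2 : w ^ 2 < Δ := by exact_mod_cast h1
    omega
  have hdvd' : 4 * b ∣ Δ - w ^ 2 := by
    have hrw : Δ - w ^ 2 = (Δ - u ^ 2) + 4 * b * (k * u - k ^ 2 * b) := by rw [hw]; ring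
    rw [hrw]
    exact dvd_add hdvd ⟨k * u - k ^ 2 * b, by ring⟩
  refine ⟨hdvd', hpos, ?_, hiv⟩
  have hexact : 4 * b * ((Δ - w ^ 2) / (4 * b)) = Δ - w ^ 2 := Int.mul_ediv_cancel' hdvd'
  rcases lt_or_ge ((Δ - w ^ 2) / (4 * b)) 1 with hlt | hle
  · exfalso; nlinarith [hexact]
  · exact hle



/-- all triples `(u,a,b)` with `u² + 4ab = Δ`, `a, b ≥ 1` (inside a bounding box). -/
noncomputable def trip (Δ : ℤ) : Finset (ℤ × ℤ × ℤ) :=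
  (Finset.Icc (-Δ) Δ ×ˢ Finset.Icc 1 Δ ×ˢ Finset.Icc 1 Δ).filter
    (fun t => t.1 ^ 2 + 4 * t.2.1 * t.2.2 = Δ)

lemma mem_trip {Δ : ℤ} (h5 : 5 ≤ Δ) {u a b : ℤ} :
    (u, a, b) ∈ trip Δ ↔ u ^ 2 + 4 * a * b = Δ ∧ 1 ≤ a ∧ 1 ≤ b := by
  simp only [trip, Finset.mem_filter, Finset.mem_product, Finset.mem_Icc]
  constructor
  · rintro ⟨⟨⟨h1, h2⟩, ⟨h3, h4⟩, h5', h6⟩, heq⟩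
    exact ⟨heq, h3, h5'⟩
  · rintro ⟨heq, ha, hb⟩
    have husq : u ^ 2 ≤ Δ - 4 := by nlinarith
    refine ⟨⟨⟨?_, ?_⟩, ⟨ha, ?_⟩, hb, ?_⟩, heq⟩
    · nlinarith
    · nlinarith
    · nlinarith
    · nlinarith

/-- pairs `(a,b)` with `4ab = m` in the box. -/
noncomputable def pairsM (Δ m : ℤ) : Finset (ℤ × ℤ) :=
  (Finset.Icc 1 Δ ×ˢ Finset.Icc 1 Δ).filter (fun ab => 4 * ab.1 * ab.2 = m)

lemma trip_subset (Δ : ℤ) :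
    trip Δ ⊆ (Finset.Icc (-Δ) Δ).biUnion
      (fun u => (pairsM Δ (Δ - u ^ 2)).image (fun ab => (u, ab.1, ab.2))) := by
  intro t ht
  simp only [trip, Finset.mem_filter, Finset.mem_product, Finset.mem_Icc] at ht
  obtain ⟨⟨⟨h1, h2⟩, h3, h4⟩, heq⟩ := ht
  simp only [Finset.mem_biUnion, Finset.mem_image, Finset.mem_Icc]
  refine ⟨t.1, ⟨h1, h2⟩, (t.2.1, t.2.2), ?_, rfl⟩
  simp only [pairsM, Finset.mem_filter, Finset.mem_product, Finset.mem_Icc]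
  exact ⟨⟨h3, h4⟩, by omega⟩

lemma card_pairsM_le {Δ m : ℤ} (h4 : 4 ∣ m) (hpos : 0 < m) :
    (pairsM Δ m).card ≤ (m / 4).toNat.divisors.card := by
  apply Finset.card_le_card_of_injOn (fun ab => ab.1.toNat)
  · intro ab hab
    simp only [pairsM, Finset.mem_coe, Finset.mem_filter, Finset.mem_product, Finset.mem_Icc] at hab
    obtain ⟨⟨⟨ha1, _⟩, hb1, _⟩, heq⟩ := hab
    simp only [Finset.mem_coe, Nat.mem_divisors]
    constructor
    · refine ⟨ab.2.toNat, ?_⟩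
      have h44 : 4 * (ab.1 * ab.2) = m := by rw [← heq]; ring
      have hd : m / 4 = ab.1 * ab.2 := by omega
      have h1 : (0:ℤ) ≤ ab.1 := by omega
      have h2 : (0:ℤ) ≤ ab.2 := by omega
      have hc : ((ab.1 * ab.2).toNat : ℤ) = (ab.1.toNat : ℤ) * (ab.2.toNat : ℤ) := by
        rw [Int.toNat_of_nonneg (mul_nonneg h1 h2), Int.toNat_of_nonneg h1,
          Int.toNat_of_nonneg h2]
      rw [hd]
      exact_mod_cast hc
    · have h44 : 4 * (ab.1 * ab.2) = m := by rw [← heq]; ring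
      have : 1 ≤ ab.1 * ab.2 := by nlinarith
      omega
  · intro x hx y hy hxy
    simp only [pairsM, Finset.mem_coe, Finset.mem_filter, Finset.mem_product,
      Finset.mem_Icc] at hx hy
    obtain ⟨⟨⟨hx1, _⟩, hx2, _⟩, hxe⟩ := hx
    obtain ⟨⟨⟨hy1, _⟩, hy2, _⟩, hye⟩ := hy
    simp only at hxy
    have hxy' : (x.1.toNat : ℤ) = (y.1.toNat : ℤ) := by exact_mod_cast hxy
    have h1 : x.1 = y.1 := by omega
    have h2 : x.2 = y.2 := by
      have : 4 * x.1 * x.2 = 4 * x.1 * y.2 := by rw [hxe, h1, hye]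
      have hne : x.1 ≠ 0 := by omega
      exact mul_left_cancel₀ (by omega : (4 : ℤ) * x.1 ≠ 0) this
    exact Prod.ext h1 h2

lemma pairsM_empty_of_not_dvd {Δ m : ℤ} (h : ¬ (4 ∣ m) ∨ m ≤ 0) : pairsM Δ m = ∅ := by
  rw [Finset.eq_empty_iff_forall_notMem]
  intro ab hab
  simp only [pairsM, Finset.mem_filter, Finset.mem_product, Finset.mem_Icc] at hab
  obtain ⟨⟨⟨ha1, _⟩, hb1, _⟩, heq⟩ := hab
  have h44 : 4 * (ab.1 * ab.2) = m := by rw [← heq]; ring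
  rcases h with h | h
  · exact h ⟨ab.1 * ab.2, h44.symm⟩
  · nlinarith


/-- fiber cardinality -/
noncomputable def gC (Δ u : ℤ) : ℕ := (pairsM Δ (Δ - u ^ 2)).card

lemma gC_neg (Δ u : ℤ) : gC Δ (-u) = gC Δ u := by
  unfold gC; rw [neg_pow]; norm_num

lemma gC_eq_zero {Δ u : ℤ} (h : ¬ (4 ∣ Δ - u ^ 2) ∨ Δ - u ^ 2 ≤ 0) : gC Δ u = 0 := by
  unfold gC; rw [pairsM_empty_of_not_dvd h]; rfl

lemma gC_le {Δ u : ℤ} (h4 : 4 ∣ Δ - u ^ 2) (hpos : 0 < Δ - u ^ 2) :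
    gC Δ u ≤ ((Δ - u ^ 2) / 4).toNat.divisors.card :=
  card_pairsM_le h4 hpos

lemma card_trip_le_sum (Δ : ℤ) (h5 : 5 ≤ Δ) :
    (trip Δ).card ≤ gC Δ 0 + 2 * ∑ u ∈ Finset.Icc 1 Δ, gC Δ u := by
  have h1 : (trip Δ).card ≤ ∑ u ∈ Finset.Icc (-Δ) Δ, gC Δ u := by
    calc (trip Δ).card ≤ ((Finset.Icc (-Δ) Δ).biUnion
        (fun u => (pairsM Δ (Δ - u ^ 2)).image (fun ab => (u, ab.1, ab.2)))).card :=
          Finset.card_le_card (trip_subset Δ)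
    _ ≤ ∑ u ∈ Finset.Icc (-Δ) Δ,
          ((pairsM Δ (Δ - u ^ 2)).image (fun ab => (u, ab.1, ab.2))).card :=
          Finset.card_biUnion_le
    _ ≤ ∑ u ∈ Finset.Icc (-Δ) Δ, gC Δ u := by
          apply Finset.sum_le_sum
          intro u _
          exact Finset.card_image_le
  have hsplit : Finset.Icc (-Δ) Δ = Finset.Icc (-Δ) (-1) ∪ Finset.Icc 0 Δ := by
    ext x; simp only [Finset.mem_union, Finset.mem_Icc]; omega
  have hdisj : Disjoint (Finset.Icc (-Δ) (-1)) (Finset.Icc 0 Δ) := by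
    rw [Finset.disjoint_left]
    intro x hx hx'
    simp only [Finset.mem_Icc] at hx hx'
    omega
  have hneg : ∑ u ∈ Finset.Icc (-Δ) (-1), gC Δ u = ∑ u ∈ Finset.Icc 1 Δ, gC Δ u := by
    apply Finset.sum_nbij' (i := fun u => -u) (j := fun u => -u)
    · intro u hu; simp only [Finset.mem_Icc] at hu ⊢; omega
    · intro u hu; simp only [Finset.mem_Icc] at hu ⊢; omega
    · intro u _; omega
    · intro u _; omega
    · intro u _; rw [← gC_neg Δ (-u)]; norm_num
  have hzero : ∑ u ∈ Finset.Icc 0 Δ, gC Δ u = gC Δ 0 + ∑ u ∈ Finset.Icc 1 Δ, gC Δ u := by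
    have : Finset.Icc (0:ℤ) Δ = insert 0 (Finset.Icc 1 Δ) := by
      ext x; simp only [Finset.mem_insert, Finset.mem_Icc]; omega
    rw [this, Finset.sum_insert (by simp)]
  rw [hsplit, Finset.sum_union hdisj, hneg, hzero] at h1
  omega

lemma even_of_dvd {Δ u : ℤ} (hmod : Δ % 4 = 0) (hdvd : 4 ∣ Δ - u ^ 2) : u % 2 = 0 := by
  rcases Int.even_or_odd u with h | h
  · obtain ⟨j, hj⟩ := h; omega
  · exfalso
    obtain ⟨j, hj⟩ := h
    have h2 : u ^ 2 = 4 * (j * j + j) + 1 := by rw [hj]; ring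
    obtain ⟨c, hc⟩ := hdvd
    omega

lemma odd_of_dvd {Δ u : ℤ} (hmod : Δ % 4 = 1) (hdvd : 4 ∣ Δ - u ^ 2) : u % 2 = 1 := by
  rcases Int.even_or_odd u with h | h
  · exfalso
    obtain ⟨j, hj⟩ := h
    have h2 : u ^ 2 = 4 * (j * j) := by rw [hj]; ring
    obtain ⟨c, hc⟩ := hdvd
    omega
  · obtain ⟨j, hj⟩ := h; omega

set_option maxHeartbeats 1000000 in
lemma card_trip_le (Δ : ℤ) (h5 : 5 ≤ Δ) (hmod : Δ % 4 = 0 ∨ Δ % 4 = 1) :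
    ((trip Δ).card : ℤ) ≤ fBound Δ := by
  have hmain := card_trip_le_sum Δ h5
  have hS : ∑ u ∈ Finset.Icc 1 Δ, gC Δ u =
      ∑ u ∈ (Finset.Icc 1 Δ).filter (fun u => 4 ∣ Δ - u ^ 2 ∧ 0 < Δ - u ^ 2), gC Δ u := by
    rw [Finset.sum_filter_of_ne]
    intro u _ hne
    rcases Decidable.em (4 ∣ Δ - u ^ 2) with h | h
    · rcases le_or_gt (Δ - u ^ 2) 0 with h2 | h2
      · exact absurd (gC_eq_zero (Or.inr h2)) hne
      · exact ⟨h, h2⟩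
    · exact absurd (gC_eq_zero (Or.inl h)) hne
  set S := (Finset.Icc 1 Δ).filter (fun u => 4 ∣ Δ - u ^ 2 ∧ 0 < Δ - u ^ 2) with hSdef
  rcases hmod with hmod | hmod
  · -- Δ ≡ 0 mod 4
    set m : ℤ := Δ / 4 with hm
    have hm4 : 4 * m = Δ := by omega
    have hg0 : gC Δ 0 ≤ m.toNat.divisors.card := by
      have := gC_le (Δ := Δ) (u := 0) (by omega) (by omega)
      simpa using this
    have keyfacts : ∀ u ∈ S, 1 ≤ (u / 2).toNat ∧ (u / 2).toNat ^ 2 ≤ m.toNat - 1 ∧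
        ((Δ - u ^ 2) / 4).toNat = m.toNat - ((u / 2).toNat) ^ 2 := by
      intro u hu
      simp only [hSdef, Finset.mem_filter, Finset.mem_Icc] at hu
      obtain ⟨⟨hu1, hu2⟩, hdvd, hpos⟩ := hu
      have heven : u % 2 = 0 := even_of_dvd hmod hdvd
      have hu2k : u = 2 * (u / 2) := by omega
      have hkN : (((u / 2).toNat : ℤ)) = u / 2 := Int.toNat_of_nonneg (by omega)
      obtain ⟨E, hE⟩ : ∃ E : ℤ, (u / 2) ^ 2 = E := ⟨_, rfl⟩
      obtain ⟨EN, hEN⟩ : ∃ EN : ℕ, (u / 2).toNat ^ 2 = EN := ⟨_, rfl⟩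
      have hcast : (EN : ℤ) = E := by rw [← hE, ← hEN, Nat.cast_pow, hkN]
      have hk2 : u ^ 2 = 4 * E := by
        rw [← hE]
        calc u ^ 2 = (2 * (u / 2)) ^ 2 := by rw [← hu2k]
        _ = 4 * (u / 2) ^ 2 := by ring
      rw [hk2] at hpos
      rw [hEN, hk2]
      omega
    have hsum : ∑ u ∈ S, gC Δ u ≤
        ∑ v ∈ Finset.Icc 1 (Nat.sqrt m.toNat), (m.toNat - v ^ 2).divisors.card := by
      calc ∑ u ∈ S, gC Δ u ≤ ∑ u ∈ S, (m.toNat - ((u / 2).toNat) ^ 2).divisors.card := by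
            apply Finset.sum_le_sum
            intro u hu
            have hkf := keyfacts u hu
            simp only [hSdef, Finset.mem_filter, Finset.mem_Icc] at hu
            obtain ⟨⟨hu1, hu2⟩, hdvd, hpos⟩ := hu
            calc gC Δ u ≤ ((Δ - u ^ 2) / 4).toNat.divisors.card := gC_le hdvd hpos
            _ = (m.toNat - ((u / 2).toNat) ^ 2).divisors.card := by rw [hkf.2.2]
      _ = ∑ v ∈ S.image (fun u => (u / 2).toNat), (m.toNat - v ^ 2).divisors.card := by
            rw [Finset.sum_image]
            intro x hx y hy hxy
            simp only at hxy
            have hex : x % 2 = 0 := by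
              simp only [hSdef, Finset.mem_coe, Finset.mem_filter, Finset.mem_Icc] at hx
              exact even_of_dvd hmod hx.2.1
            have hey : y % 2 = 0 := by
              simp only [hSdef, Finset.mem_coe, Finset.mem_filter, Finset.mem_Icc] at hy
              exact even_of_dvd hmod hy.2.1
            have hx1 : 1 ≤ x := by
              simp only [hSdef, Finset.mem_coe, Finset.mem_filter, Finset.mem_Icc] at hx; exact hx.1.1
            have hy1 : 1 ≤ y := by
              simp only [hSdef, Finset.mem_coe, Finset.mem_filter, Finset.mem_Icc] at hy; exact hy.1.1
            have : ((x / 2).toNat : ℤ) = ((y / 2).toNat : ℤ) := by exact_mod_cast hxy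
            omega
      _ ≤ ∑ v ∈ Finset.Icc 1 (Nat.sqrt m.toNat), (m.toNat - v ^ 2).divisors.card := by
            apply Finset.sum_le_sum_of_subset
            intro v hv
            simp only [Finset.mem_image] at hv
            obtain ⟨u, hu, hv⟩ := hv
            have hkf := keyfacts u hu
            simp only [Finset.mem_Icc]
            constructor
            · omega
            · rw [← hv, Nat.le_sqrt']
              omega
    rw [hS] at hmain
    simp only [fBound, if_pos hmod]
    have hfin : (trip Δ).card ≤ m.toNat.divisors.card +
        2 * ∑ v ∈ Finset.Icc 1 (Nat.sqrt m.toNat), (m.toNat - v ^ 2).divisors.card := by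
      omega
    push_cast at hfin ⊢
    rw [← hm]
    linarith
  · -- Δ ≡ 1 mod 4
    have hg0 : gC Δ 0 = 0 := gC_eq_zero (Or.inl (by omega))
    have hsum : ∑ u ∈ S, gC Δ u ≤
        ∑ j ∈ (Finset.range Δ.toNat).filter (fun j : ℕ => Odd j ∧ (j : ℤ) ^ 2 < Δ),
          ((Δ - (j : ℤ) ^ 2) / 4).toNat.divisors.card := by
      calc ∑ u ∈ S, gC Δ u
          ≤ ∑ u ∈ S, ((Δ - ((u.toNat : ℤ)) ^ 2) / 4).toNat.divisors.card := by
            apply Finset.sum_le_sum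
            intro u hu
            simp only [hSdef, Finset.mem_filter, Finset.mem_Icc] at hu
            obtain ⟨⟨hu1, hu2⟩, hdvd, hpos⟩ := hu
            have hkN : ((u.toNat : ℤ)) = u := Int.toNat_of_nonneg (by omega)
            rw [hkN]
            exact gC_le hdvd hpos
      _ = ∑ j ∈ S.image (fun u => u.toNat), ((Δ - ((j : ℤ)) ^ 2) / 4).toNat.divisors.card := by
            rw [Finset.sum_image]
            intro x hx y hy hxy
            simp only at hxy
            simp only [hSdef, Finset.mem_coe, Finset.mem_filter, Finset.mem_Icc] at hx hy
            have : ((x.toNat : ℤ)) = ((y.toNat : ℤ)) := by exact_mod_cast hxy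
            omega
      _ ≤ _ := by
            apply Finset.sum_le_sum_of_subset
            intro j hj
            simp only [Finset.mem_image] at hj
            obtain ⟨u, hu, hj⟩ := hj
            simp only [hSdef, Finset.mem_filter, Finset.mem_Icc] at hu
            obtain ⟨⟨hu1, hu2⟩, hdvd, hpos⟩ := hu
            have hodd : u % 2 = 1 := odd_of_dvd hmod hdvd
            have hkN : ((u.toNat : ℤ)) = u := Int.toNat_of_nonneg (by omega)
            have husq : u ≤ u ^ 2 := by nlinarith
            simp only [Finset.mem_filter, Finset.mem_range]
            refine ⟨?_, ?_, ?_⟩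
            · omega
            · rw [Nat.odd_iff]; omega
            · rw [← hj, hkN]; omega
    rw [hS] at hmain
    simp only [fBound, if_neg (show ¬ Δ % 4 = 0 by omega)]
    have hfin : (trip Δ).card ≤
        2 * ∑ j ∈ (Finset.range Δ.toNat).filter (fun j : ℕ => Odd j ∧ (j : ℤ) ^ 2 < Δ),
          ((Δ - (j : ℤ) ^ 2) / 4).toNat.divisors.card := by omega
    push_cast at hfin ⊢
    linarith

end Arnold

set_option maxHeartbeats 4000000 in
theorem arnold_lemma3_odd_period_aux (p q : ℤ)
    (hΔ : 0 < p ^ 2 + 4 * q) (hns : ¬ IsSquare (p ^ 2 + 4 * q))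
    (hT : Odd (period p q)) :
    2 * periodSum p q ≤ fBound (p ^ 2 + 4 * q) := by
  classical
  set Δ : ℤ := p ^ 2 + 4 * q with hΔdef
  have hmod : Δ % 4 = 0 ∨ Δ % 4 = 1 := by
    rcases Int.even_or_odd p with ⟨t, ht⟩ | ⟨t, ht⟩
    · left
      have hp : p ^ 2 = 4 * (t * t) := by rw [ht]; ring
      omega
    · right
      have hp : p ^ 2 = 4 * (t * t + t) + 1 := by rw [ht]; ring
      omega
  have h5 : 5 ≤ Δ := by
    have h1 : Δ ≠ 1 := fun h => hns (h ▸ ⟨1, by norm_num⟩)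
    have h4 : Δ ≠ 4 := fun h => hns (h ▸ ⟨2, by norm_num⟩)
    omega
  have hirr : Irrational (Real.sqrt ((Δ : ℤ) : ℝ)) :=
    (irrational_sqrt_intCast_iff_of_nonneg (by omega)).mpr hns
  set y : ℝ := Int.fract (xPlus p q) with hy
  set T : ℕ := period p q with hTdef
  set Sset : Set ℕ :=
    {T' : ℕ | 1 ≤ T' ∧ ∀ i : ℕ, 1 ≤ i → cfDigit (i + T') y = cfDigit i y} with hSset
  have hperiod_eq : T = sInf Sset := rfl
  have hne : Sset.Nonempty := by
    by_contra hcon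
    rw [Set.not_nonempty_iff_eq_empty] at hcon
    have hzero : T = 0 := by rw [hperiod_eq, hcon, Nat.sInf_empty]
    rw [hzero] at hT
    simp [Nat.odd_iff] at hT
  have hmem := Nat.sInf_mem hne
  rw [← hperiod_eq] at hmem
  obtain ⟨hT1, hper⟩ := hmem
  have hmin : ∀ d, d ∈ Sset → T ≤ d := fun d hd => hperiod_eq ▸ Nat.sInf_le hd
  -- periodicity extension to multiples
  have per_mul : ∀ k i, 1 ≤ i → cfDigit (i + k * T) y = cfDigit i y := by
    intro k
    induction k with
    | zero => intro i _; simp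
    | succ k ih =>
      intro i hi
      have he : i + (k + 1) * T = (i + k * T) + T := by ring
      rw [he, hper (i + k * T) (by omega), ih i hi]
  -- the state machine
  set A : ℕ → ℤ × ℤ := fun n => Arnold.st Δ (Arnold.t0 p q) n with hA
  have hinv : ∀ n, Arnold.InvP Δ (A n) := fun n => (Arnold.iter_main p q h5 hirr n).1
  have hdig : ∀ n, cfDigit (n + 1) y = Arnold.digA Δ (A n) := fun n =>
    Arnold.dig_eq p q h5 hirr n
  have hshift : ∀ n1 n2, A n1 = A n2 → ∀ r, A (n1 + r) = A (n2 + r) := by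
    intro n1 n2 h r
    induction r with
    | zero => simpa using h
    | succ r ih =>
      show Arnold.stp Δ (A (n1 + r)) = Arnold.stp Δ (A (n2 + r))
      rw [ih]
  -- distinctness of the first T states
  have hkey : ∀ n1 n2, n1 < n2 → n2 < T → A n1 = A n2 → False := by
    intro n1 n2 hlt hT2 heq
    set d := n2 - n1 with hd
    have hd1 : 1 ≤ d := by omega
    have hbig : ∀ n, n1 ≤ n → cfDigit (n + 1 + d) y = cfDigit (n + 1) y := by
      intro n hn
      have h1 : A (n + d) = A n := by
        have h2 := hshift n2 n1 heq.symm (n - n1)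
        have e1 : n2 + (n - n1) = n + d := by omega
        have e2 : n1 + (n - n1) = n := by omega
        rwa [e1, e2] at h2
      rw [show n + 1 + d = (n + d) + 1 by omega, hdig (n + d), h1, ← hdig n]
    have hdig_shift : ∀ i, 1 ≤ i → cfDigit (i + d) y = cfDigit i y := by
      intro i hi
      have hTmul : n1 + 1 ≤ (n1 + 1) * T := Nat.le_mul_of_pos_right _ (by omega)
      calc cfDigit (i + d) y = cfDigit (i + d + (n1 + 1) * T) y :=
            (per_mul (n1 + 1) (i + d) (by omega)).symm
      _ = cfDigit ((i + (n1 + 1) * T - 1) + 1 + d) y := by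
            rw [show i + d + (n1 + 1) * T = (i + (n1 + 1) * T - 1) + 1 + d by omega]
      _ = cfDigit ((i + (n1 + 1) * T - 1) + 1) y := hbig _ (by omega)
      _ = cfDigit (i + (n1 + 1) * T) y := by rw [show (i + (n1 + 1) * T - 1) + 1 = i + (n1 + 1) * T by omega]
      _ = cfDigit i y := per_mul (n1 + 1) i hi
    have hdS : d ∈ Sset := ⟨hd1, hdig_shift⟩
    have := hmin d hdS
    omega
  have hstinj : ∀ n1 n2, n1 < T → n2 < T → A n1 = A n2 → n1 = n2 := by
    intro n1 n2 h1 h2 heq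
    rcases Nat.lt_trichotomy n1 n2 with h | h | h
    · exact absurd (hkey n1 n2 h h2 heq) not_false
    · exact h
    · exact absurd (hkey n2 n1 h h1 heq.symm) not_false
  -- the injection
  set aN : ℕ → ℤ := fun n => Arnold.digA Δ (A n) with haN
  have haN1 : ∀ n, 1 ≤ aN n := fun n => (hinv n).digA_pos
  set Src : Finset (Σ _ : ℕ, ℕ) :=
    (Finset.range T).sigma (fun n => Finset.range (aN n).toNat) with hSrc
  set wf : ℕ → ℕ → ℤ := fun n k => (A n).1 - 2 * (k : ℤ) * (A n).2 with hwf
  set Af : ℕ → ℕ → ℤ := fun n k => (Δ - (wf n k) ^ 2) / (4 * (A n).2) with hAf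
  have hkint : ∀ (n : ℕ) (k : ℕ), k < (aN n).toNat → (k : ℤ) < aN n := by
    intro n k hk
    have := haN1 n
    omega
  have hmidall : ∀ (n k : ℕ), k < (aN n).toNat →
      (4 * (A n).2 ∣ Δ - (wf n k) ^ 2) ∧ 0 < Δ - (wf n k) ^ 2 ∧
        1 ≤ Af n k ∧ 2 * ((A n).2 : ℝ) < ((wf n k : ℤ) : ℝ) + Real.sqrt (Δ : ℝ) := by
    intro n k hk
    exact Arnold.mid (by omega) hirr (hinv n) (Int.natCast_nonneg k) (hkint n k hk)
  have hexactall : ∀ (n k : ℕ), k < (aN n).toNat →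
      4 * (A n).2 * Af n k = Δ - (wf n k) ^ 2 := by
    intro n k hk
    exact Int.mul_ediv_cancel' (hmidall n k hk).1
  set φ1 : (Σ _ : ℕ, ℕ) → ℤ × ℤ × ℤ := fun x => (wf x.1 x.2, Af x.1 x.2, (A x.1).2) with hφ1
  set φ2 : (Σ _ : ℕ, ℕ) → ℤ × ℤ × ℤ :=
    fun x => (-(wf x.1 x.2), (A x.1).2, Af x.1 x.2) with hφ2
  have hmemSrc : ∀ x : (Σ _ : ℕ, ℕ), x ∈ Src → x.1 < T ∧ x.2 < (aN x.1).toNat := by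
    intro x hx
    rw [hSrc, Finset.mem_sigma] at hx
    simpa [Finset.mem_range] using hx
  have hmem1 : ∀ x ∈ Src, φ1 x ∈ Arnold.trip Δ := by
    intro x hx
    obtain ⟨hx1, hx2⟩ := hmemSrc x hx
    obtain ⟨_, hpos, hA1, _⟩ := hmidall x.1 x.2 hx2
    have hex := hexactall x.1 x.2 hx2
    rw [hφ1, Arnold.mem_trip h5]
    refine ⟨?_, hA1, (hinv x.1).1⟩
    have h4 : 4 * Af x.1 x.2 * (A x.1).2 = Δ - (wf x.1 x.2) ^ 2 := by rw [← hex]; ring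
    linarith
  have hmem2 : ∀ x ∈ Src, φ2 x ∈ Arnold.trip Δ := by
    intro x hx
    obtain ⟨hx1, hx2⟩ := hmemSrc x hx
    obtain ⟨_, hpos, hA1, _⟩ := hmidall x.1 x.2 hx2
    have hex := hexactall x.1 x.2 hx2
    rw [hφ2, Arnold.mem_trip h5]
    refine ⟨?_, (hinv x.1).1, hA1⟩
    have h4 : 4 * (A x.1).2 * Af x.1 x.2 = Δ - (wf x.1 x.2) ^ 2 := hex
    have h5' : (-(wf x.1 x.2)) ^ 2 = (wf x.1 x.2) ^ 2 := by ring
    linarith [h5'.le, h5'.ge]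
  -- injectivity helper: from equal (w, b) data conclude equal index
  have hinj_core : ∀ x ∈ Src, ∀ z ∈ Src,
      wf x.1 x.2 = wf z.1 z.2 → (A x.1).2 = (A z.1).2 → x = z := by
    rintro ⟨n1, k1⟩ hx ⟨n2, k2⟩ hz hw hb
    obtain ⟨hxT, hxk⟩ := hmemSrc _ hx
    obtain ⟨hzT, hzk⟩ := hmemSrc _ hz
    dsimp only at hw hb hxT hxk hzT hzk
    obtain ⟨hb1R, hiu1, hil1, hu1lt⟩ := (hinv n1).key
    obtain ⟨hb2R, hiu2, hil2, hu2lt⟩ := (hinv n2).key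
    -- same b
    have hbR : ((A n1).2 : ℝ) = ((A n2).2 : ℝ) := by exact_mod_cast hb
    -- u1 - u2 = 2 b (k1 - k2)
    have hwZ : (A n1).1 - 2 * (k1 : ℤ) * (A n1).2 = (A n2).1 - 2 * (k2 : ℤ) * (A n2).2 := hw
    have hbound1 : -(2 * ((A n1).2 : ℝ)) < ((A n1).1 : ℝ) - ((A n2).1 : ℝ) := by
      nlinarith [hil1, hu2lt, hbR]
    have hbound2 : ((A n1).1 : ℝ) - ((A n2).1 : ℝ) < 2 * ((A n1).2 : ℝ) := by
      nlinarith [hil2, hu1lt, hbR]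
    have hbZ1 : -(2 * (A n1).2) < (A n1).1 - (A n2).1 := by exact_mod_cast hbound1
    have hbZ2 : (A n1).1 - (A n2).1 < 2 * (A n1).2 := by exact_mod_cast hbound2
    have hdiff : (A n1).1 - (A n2).1 = 2 * (A n1).2 * ((k1 : ℤ) - (k2 : ℤ)) := by
      rw [← hb] at hwZ
      linear_combination hwZ
    have hbpos : 1 ≤ (A n1).2 := (hinv n1).1
    have hkk : (k1 : ℤ) = (k2 : ℤ) := by
      rcases lt_trichotomy ((k1 : ℤ) - (k2 : ℤ)) 0 with h | h | h
      · exfalso; nlinarith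
      · omega
      · exfalso; nlinarith
    have hk12 : k1 = k2 := by exact_mod_cast hkk
    have huu : (A n1).1 = (A n2).1 := by
      rw [hkk] at hdiff
      omega
    have hAA : A n1 = A n2 := Prod.ext huu hb
    have hnn : n1 = n2 := hstinj n1 n2 hxT hzT hAA
    subst hnn; subst hk12; rfl
  have hinj1 : Set.InjOn φ1 ↑Src := by
    intro x hx z hz heq
    rw [hφ1] at heq
    have h1 : wf x.1 x.2 = wf z.1 z.2 := congrArg (fun t => t.1) heq
    have h3 : (A x.1).2 = (A z.1).2 := congrArg (fun t => t.2.2) heq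
    exact hinj_core x (Finset.mem_coe.mp hx) z (Finset.mem_coe.mp hz) h1 h3
  have hinj2 : Set.InjOn φ2 ↑Src := by
    intro x hx z hz heq
    rw [hφ2] at heq
    have h1 : -(wf x.1 x.2) = -(wf z.1 z.2) := congrArg (fun t => t.1) heq
    have h3 : (A x.1).2 = (A z.1).2 := congrArg (fun t => t.2.1) heq
    exact hinj_core x (Finset.mem_coe.mp hx) z (Finset.mem_coe.mp hz) (by omega) h3
  -- images are disjoint
  have hsep : ∀ x ∈ Src, ∀ z ∈ Src, φ1 x ≠ φ2 z := by
    intro x hx z hz heq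
    rw [hφ1, hφ2] at heq
    obtain ⟨hxT, hxk⟩ := hmemSrc x hx
    obtain ⟨hzT, hzk⟩ := hmemSrc z hz
    have h1 : wf x.1 x.2 = -(wf z.1 z.2) := congrArg (fun t => t.1) heq
    have h2 : Af x.1 x.2 = (A z.1).2 := congrArg (fun t => t.2.1) heq
    have h3 : (A x.1).2 = Af z.1 z.2 := congrArg (fun t => t.2.2) heq
    obtain ⟨_, hpos1, hA11, hiv1⟩ := hmidall x.1 x.2 hxk
    obtain ⟨_, hpos2, hA12, hiv2⟩ := hmidall z.1 z.2 hzk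
    have hex1 := hexactall x.1 x.2 hxk
    set s : ℝ := Real.sqrt (Δ : ℝ) with hs
    have hsq : s ^ 2 = (Δ : ℝ) := Arnold.sqrt_sq (by omega)
    have hb1R : (0 : ℝ) < ((A x.1).2 : ℝ) := (hinv x.1).key.1
    have hb2R : (0 : ℝ) < ((A z.1).2 : ℝ) := (hinv z.1).key.1
    -- w2 = -w1
    have hw2R : ((wf z.1 z.2 : ℤ) : ℝ) = -((wf x.1 x.2 : ℤ) : ℝ) := by
      have : wf z.1 z.2 = -(wf x.1 x.2) := by omega
      rw [this]; push_cast; ring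
    have hmul : (2 * ((A x.1).2 : ℝ)) * (2 * ((A z.1).2 : ℝ)) <
        (((wf x.1 x.2 : ℤ) : ℝ) + s) * (((wf z.1 z.2 : ℤ) : ℝ) + s) :=
      mul_lt_mul'' hiv1 hiv2 (by positivity) (by positivity)
    have hrhs : (((wf x.1 x.2 : ℤ) : ℝ) + s) * (((wf z.1 z.2 : ℤ) : ℝ) + s) =
        (Δ : ℝ) - ((wf x.1 x.2 : ℤ) : ℝ) ^ 2 := by
      rw [hw2R, ← hsq]; ring
    have hlhsZ : 4 * (A x.1).2 * (A z.1).2 = Δ - (wf x.1 x.2) ^ 2 := by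
      rw [← h2] at *
      exact hex1
    have hlhsR : 4 * ((A x.1).2 : ℝ) * ((A z.1).2 : ℝ) =
        (Δ : ℝ) - ((wf x.1 x.2 : ℤ) : ℝ) ^ 2 := by exact_mod_cast hlhsZ
    nlinarith [hmul, hrhs, hlhsR]
  have hdisj : Disjoint (Src.image φ1) (Src.image φ2) := by
    rw [Finset.disjoint_left]
    intro t ht1 ht2
    rw [Finset.mem_image] at ht1 ht2
    obtain ⟨x, hx, hxe⟩ := ht1
    obtain ⟨z, hz, hze⟩ := ht2
    exact hsep x hx z hz (hxe.trans hze.symm)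
  have hsub : Src.image φ1 ∪ Src.image φ2 ⊆ Arnold.trip Δ := by
    apply Finset.union_subset
    · rw [Finset.image_subset_iff]; exact hmem1
    · rw [Finset.image_subset_iff]; exact hmem2
  have hcard : 2 * Src.card ≤ (Arnold.trip Δ).card := by
    have h1 : (Src.image φ1 ∪ Src.image φ2).card ≤ (Arnold.trip Δ).card :=
      Finset.card_le_card hsub
    rw [Finset.card_union_of_disjoint hdisj, Finset.card_image_of_injOn hinj1,
      Finset.card_image_of_injOn hinj2] at h1
    omega
  have hSrcCard : Src.card = ∑ n ∈ Finset.range T, (aN n).toNat := by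
    rw [hSrc, Finset.card_sigma]
    exact Finset.sum_congr rfl fun n _ => Finset.card_range _
  -- relate periodSum to the sum of digits
  have hps : periodSum p q = ∑ n ∈ Finset.range T, aN n := by
    show ∑ i ∈ Finset.Icc 1 T, cfDigit i y = ∑ n ∈ Finset.range T, aN n
    rw [← Finset.Ico_add_one_right_eq_Icc, Finset.sum_Ico_eq_sum_range]
    apply Finset.sum_congr rfl
    intro n _
    rw [show 1 + n = n + 1 by omega, hdig n, haN]
  have hpsN : periodSum p q = ((∑ n ∈ Finset.range T, (aN n).toNat : ℕ) : ℤ) := by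
    rw [hps]
    push_cast
    apply Finset.sum_congr rfl
    intro n _
    exact (Int.toNat_of_nonneg (by linarith [haN1 n])).symm
  have hfinal := Arnold.card_trip_le Δ h5 hmod
  rw [hpsN, ← hSrcCard]
  calc 2 * ((Src.card : ℕ) : ℤ) = ((2 * Src.card : ℕ) : ℤ) := by push_cast; ring
  _ ≤ ((Arnold.trip Δ).card : ℤ) := by exact_mod_cast hcard
  _ ≤ fBound Δ := hfinal

/-- Improvement of Lemma 3 for odd period: if `Δ = p² + 4q` is positive and not a
perfect square and the least period `T(p,q)` is odd, then
`2 Σ_{i=1}^{T(p,q)} a_i(frac (x₊(p,q))) ≤ f(Δ/4)`. -/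
theorem arnold_lemma3_odd_period (p q : ℤ)
    (hΔ : 0 < p ^ 2 + 4 * q) (hns : ¬ IsSquare (p ^ 2 + 4 * q))
    (hT : Odd (period p q)) :
    2 * periodSum p q ≤ fBound (p ^ 2 + 4 * q) :=
  arnold_lemma3_odd_period_aux p q hΔ hns hT
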